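/- Fix η ∈ (0,1). There exists N₀ (depending only on η) such that for every integer N ≥ N₀ and every real E* with E* ≥ 40 N² (log N)², the downward-drifted walk started at Δ = 1 − 1/N satisfies: the probability that the walk reaches the interval [E*, ∞) strictly before it reaches (−∞, 0] is at most e^{−N}. Formally, letting τ := inf{k ≥ 0 : S_k ≤ 0 or S_k ≥ E*}, one has P(τ < ∞ and S_τ ≥ E*) ≤ e^{−N}. -/

import Mathlib

open MeasureTheory ProbabilityTheory ENNReal

lemma aux_c_pos (η : ℝ) (hη0 : 0 < η) (hη1 : η < 1) :
    0 < η - (1 - η) * (Real.exp η - 1) := by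
  have h1 : -η + 1 < Real.exp (-η) := Real.add_one_lt_exp (by linarith)
  have h2 : (1 - η) * Real.exp η < 1 := by
    have := Real.exp_pos η
    have : (-η + 1) * Real.exp η < Real.exp (-η) * Real.exp η :=
      mul_lt_mul_of_pos_right h1 this
    rwa [← Real.exp_add, neg_add_cancel, Real.exp_zero, neg_add_eq_sub] at this
  nlinarith

lemma aux_mgf (η n : ℝ) (hη0 : 0 < η) (hη1 : η < 1) (hn : 1 ≤ n) :
    ((1 - η) / n) * Real.exp (η * (1 - 1 / n)) + (1 - (1 - η) / n) * Real.exp (η * (-(1 / n)))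
      ≤ Real.exp (-((η - (1 - η) * (Real.exp η - 1)) / n)) := by
  have hn0 : 0 < n := by linarith
  set p : ℝ := (1 - η) / n with hp
  have hp0 : 0 ≤ p := div_nonneg (by linarith) hn0.le
  have hsplit : η * (1 - 1 / n) = η + η * (-(1 / n)) := by ring
  have he1 : (1 : ℝ) ≤ Real.exp η := by
    have := Real.add_one_le_exp η; linarith
  have key : 1 + p * (Real.exp η - 1) ≤ Real.exp (p * (Real.exp η - 1)) := by
    have := Real.add_one_le_exp (p * (Real.exp η - 1)); linarith
  have hLHS : p * Real.exp (η * (1 - 1 / n)) + (1 - p) * Real.exp (η * (-(1 / n)))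
      = Real.exp (η * (-(1 / n))) * (1 + p * (Real.exp η - 1)) := by
    rw [hsplit, Real.exp_add]; ring
  rw [hLHS]
  have hstep : Real.exp (η * (-(1 / n))) * (1 + p * (Real.exp η - 1))
      ≤ Real.exp (η * (-(1 / n))) * Real.exp (p * (Real.exp η - 1)) :=
    mul_le_mul_of_nonneg_left key (Real.exp_pos _).le
  refine hstep.trans_eq ?_
  rw [← Real.exp_add]
  congr 1
  rw [hp]
  ring

set_option maxHeartbeats 1000000 in
lemma aux_numeric (η c N Estar : ℝ) (hη0 : 0 < η) (hη1 : η < 1) (hc0 : 0 < c)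
    (hcη : c ≤ η) (hN : 3 ≤ N) (h40 : 4 + Real.log c⁻¹ ≤ 40 * η * N)
    (hE : 40 * N ^ 2 * Real.log N ^ 2 ≤ Estar) :
    Real.exp (-(η * (Estar - (1 - 1 / N)))) * (1 - Real.exp (-(c / N)))⁻¹
      ≤ Real.exp (-N) := by
  have hN0 : (0 : ℝ) < N := by linarith
  set x : ℝ := c / N with hxdef
  have hx0 : 0 < x := div_pos hc0 hN0
  have hx1 : x ≤ 1 := by
    rw [hxdef, div_le_one hN0]; linarith
  -- 1 - e^{-x} ≥ x/2
  have hexp1 : 1 + x ≤ Real.exp x := by have := Real.add_one_le_exp x; linarith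
  have h1x : (0:ℝ) < 1 + x := by linarith
  have hinv1 : (Real.exp x)⁻¹ ≤ (1 + x)⁻¹ := by
    apply inv_anti₀ h1x hexp1
  have hinv2 : (1 + x)⁻¹ ≤ 1 - x / 2 := by
    rw [inv_le_iff_one_le_mul₀ h1x]; nlinarith
  have h1r : x / 2 ≤ 1 - Real.exp (-x) := by
    rw [Real.exp_neg]; linarith [hinv1.trans hinv2]
  have hx2 : (0:ℝ) < x / 2 := by positivity
  have hpos : 0 < 1 - Real.exp (-x) := lt_of_lt_of_le hx2 h1r
  have hinv : (1 - Real.exp (-x))⁻¹ ≤ (x / 2)⁻¹ := inv_anti₀ hx2 h1r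
  have step1 : Real.exp (-(η * (Estar - (1 - 1 / N)))) * (1 - Real.exp (-x))⁻¹
      ≤ Real.exp (-(η * (Estar - (1 - 1 / N)))) * (x / 2)⁻¹ :=
    mul_le_mul_of_nonneg_left hinv (Real.exp_pos _).le
  refine step1.trans ?_
  -- now show exp(-ηa) * (x/2)⁻¹ ≤ exp(-N)
  have hx2ne : x / 2 ≠ 0 := hx2.ne'
  rw [← Real.exp_log hx2, ← Real.exp_neg, ← Real.exp_add]
  rw [Real.exp_le_exp]
  -- goal: -(η a) + -(log (x/2)) ≤ -N
  have hlogx : Real.log (x / 2) = Real.log c - Real.log N - Real.log 2 := by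
    rw [hxdef, div_div, Real.log_div hc0.ne' (by positivity), Real.log_mul hN0.ne' two_ne_zero]
    ring
  set L : ℝ := Real.log c⁻¹ with hLdef
  have hLlog : Real.log c = -L := by rw [hLdef, Real.log_inv]; ring
  have hL0 : 0 ≤ L := by
    rw [hLdef]; apply Real.log_nonneg; rw [le_inv_comm₀ one_pos hc0]; linarith
  have hlogN1 : 1 ≤ Real.log N := by
    rw [Real.le_log_iff_exp_le hN0]
    have := Real.exp_one_lt_d9
    linarith
  have hlogN : Real.log N ≤ N - 1 := Real.log_le_sub_one_of_pos hN0
  have hlog2 : Real.log 2 ≤ 1 := by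
    have := Real.log_le_sub_one_of_pos (show (0:ℝ) < 2 by norm_num); linarith
  have hsq : 1 ≤ Real.log N ^ 2 := by nlinarith
  have ha1 : 40 * N ^ 2 - 1 ≤ Estar - (1 - 1 / N) := by
    have h1N : 0 < 1 / N := by positivity
    nlinarith
  have ha2 : η * (40 * N ^ 2 - 1) ≤ η * (Estar - (1 - 1 / N)) :=
    mul_le_mul_of_nonneg_left ha1 hη0.le
  have ha3 : (4 + L) * N - 1 ≤ η * (40 * N ^ 2 - 1) := by
    nlinarith [mul_le_mul_of_nonneg_right h40 hN0.le]
  rw [hlogx, hLlog]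
  have hLN : L * 3 ≤ L * N := mul_le_mul_of_nonneg_left hN hL0
  nlinarith [hLN]

set_option maxHeartbeats 1000000

/-- Fix `η ∈ (0,1)`.  There exists `N₀` (depending only on `η`) such that for every integer
`N ≥ N₀` and every real `E* ≥ 40 N² (log N)²`, the downward-drifted walk started at
`Δ = 1 − 1/N` satisfies: letting `τ := inf{k ≥ 0 : S_k ≤ 0 or S_k ≥ E*}`, one has
`P(τ < ∞ and S_τ ≥ E*) ≤ e^{−N}`.  Here `τ < ∞` is expressed as nonemptiness of the set of
which `τ` is the infimum. -/
theorem stmt6 (η : ℝ) (hη0 : 0 < η) (hη1 : η < 1) :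
    ∃ N₀ : ℕ, ∀ N : ℕ, N₀ ≤ N →
    ∀ (Ω : Type) (_ : MeasurableSpace Ω) (P : Measure Ω), IsProbabilityMeasure P →
    ∀ ξ : ℕ → Ω → ℝ,
      (∀ i, Measurable (ξ i)) →
      iIndepFun ξ P →
      (∀ i, P {ω | ξ i ω = 1 - 1 / N} = ENNReal.ofReal ((1 - η) / N) ∧
            P {ω | ξ i ω = -(1 / N)} = ENNReal.ofReal (1 - (1 - η) / N)) →
    ∀ Estar : ℝ, 40 * N ^ 2 * Real.log N ^ 2 ≤ Estar →
    ∀ S : Ω → ℕ → ℝ,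
      (∀ ω k, S ω k = (1 - 1 / N) + ∑ i ∈ Finset.range k, ξ i ω) →
    ∀ τ : Ω → ℕ,
      (∀ ω, τ ω = sInf {k : ℕ | S ω k ≤ 0 ∨ Estar ≤ S ω k}) →
      P {ω | {k : ℕ | S ω k ≤ 0 ∨ Estar ≤ S ω k}.Nonempty ∧ Estar ≤ S ω (τ ω)}
        ≤ ENNReal.ofReal (Real.exp (-(N : ℝ))) := by
  set c : ℝ := η - (1 - η) * (Real.exp η - 1) with hcdef
  have hc0 : 0 < c := aux_c_pos η hη0 hη1
  have hcη : c ≤ η := by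
    have h1 : 0 ≤ (1 - η) * (Real.exp η - 1) := by
      have := Real.add_one_le_exp η
      nlinarith
    rw [hcdef]; linarith
  refine ⟨max 3 (⌈(4 + Real.log c⁻¹) / (40 * η)⌉₊ + 1), ?_⟩
  intro N hNge Ω mΩ P hP ξ hξm hξindep hξd Estar hE S hS τ hτ
  have hN3 : 3 ≤ N := le_trans (le_max_left _ _) hNge
  have hNR : (3:ℝ) ≤ (N:ℝ) := by exact_mod_cast hN3
  have hN0 : (0:ℝ) < N := by linarith
  have h40 : 4 + Real.log c⁻¹ ≤ 40 * η * N := by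
    have h1 : (⌈(4 + Real.log c⁻¹) / (40 * η)⌉₊ : ℝ) ≤ (N:ℝ) := by
      have h0 : ⌈(4 + Real.log c⁻¹) / (40 * η)⌉₊ ≤ N :=
        le_trans (le_trans (Nat.le_succ _) (le_max_right 3 _)) hNge
      exact_mod_cast h0
    have h2 : (4 + Real.log c⁻¹) / (40 * η) ≤ (N:ℝ) := (Nat.le_ceil _).trans h1
    have h3 : (0:ℝ) < 40 * η := by linarith
    rw [div_le_iff₀ h3] at h2
    linarith
  set a : ℝ := Estar - (1 - 1 / (N:ℝ)) with ha
  set ρ : ℝ≥0∞ := ENNReal.ofReal (Real.exp (-(c / N))) with hρ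
  set g : ℕ → Ω → ℝ≥0∞ := fun i ω => ENNReal.ofReal (Real.exp (η * ξ i ω)) with hg
  have hgmeas : ∀ i, Measurable (g i) := fun i =>
    (((hξm i).const_mul η).exp).ennreal_ofReal
  -- one-step mgf bound
  have hone : ∀ i, ∫⁻ ω, g i ω ∂P ≤ ρ := by
    intro i
    set A : Set Ω := {ω | ξ i ω = 1 - 1 / N} with hA
    set B : Set Ω := {ω | ξ i ω = -(1 / N)} with hB
    have hAm : MeasurableSet A := hξm i (measurableSet_singleton _)
    have hBm : MeasurableSet B := hξm i (measurableSet_singleton _)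
    have hABd : Disjoint A B := by
      rw [Set.disjoint_left]
      intro ω h1 h2
      simp only [hA, hB, Set.mem_setOf_eq] at h1 h2
      rw [h1] at h2
      linarith
    have hPA := (hξd i).1
    have hPB := (hξd i).2
    have hp0 : 0 ≤ (1 - η) / (N:ℝ) := div_nonneg (by linarith) hN0.le
    have hp1 : (1 - η) / (N:ℝ) ≤ 1 := by
      rw [div_le_one hN0]; linarith
    have hPAB : P (A ∪ B) = 1 := by
      rw [measure_union hABd hBm, hPA, hPB,
        ← ENNReal.ofReal_add hp0 (by linarith)]
      norm_num
    have hcompl : P ((A ∪ B)ᶜ) = 0 := by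
      rw [measure_compl (hAm.union hBm) (measure_ne_top P _), hPAB, measure_univ, tsub_self]
    have hIA : ∫⁻ ω in A, g i ω ∂P
        = ENNReal.ofReal (Real.exp (η * (1 - 1 / N))) * P A := by
      rw [setLIntegral_congr_fun hAm (fun ω hω => by
        simp only [hg]
        rw [show ξ i ω = 1 - 1 / (N:ℝ) from hω]), setLIntegral_const]
    have hIB : ∫⁻ ω in B, g i ω ∂P
        = ENNReal.ofReal (Real.exp (η * (-(1 / N)))) * P B := by
      rw [setLIntegral_congr_fun hBm (fun ω hω => by
        simp only [hg]
        rw [show ξ i ω = -(1 / (N:ℝ)) from hω]), setLIntegral_const]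
    calc ∫⁻ ω, g i ω ∂P
        = (∫⁻ ω in A ∪ B, g i ω ∂P) + ∫⁻ ω in (A ∪ B)ᶜ, g i ω ∂P :=
          (lintegral_add_compl _ (hAm.union hBm)).symm
      _ = (∫⁻ ω in A, g i ω ∂P) + (∫⁻ ω in B, g i ω ∂P) := by
          rw [lintegral_union hBm hABd, setLIntegral_measure_zero _ _ hcompl, add_zero]
      _ = ENNReal.ofReal ((1 - η) / N * Real.exp (η * (1 - 1 / N)))
            + ENNReal.ofReal ((1 - (1 - η) / N) * Real.exp (η * (-(1 / N)))) := by
          rw [hIA, hIB, hPA, hPB, mul_comm, mul_comm (ENNReal.ofReal (Real.exp (η * (-(1 / N))))),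
            ← ENNReal.ofReal_mul hp0, ← ENNReal.ofReal_mul (by linarith)]
      _ ≤ ρ := by
          rw [← ENNReal.ofReal_add (mul_nonneg hp0 (Real.exp_pos _).le)
            (mul_nonneg (by linarith) (Real.exp_pos _).le), hρ]
          apply ENNReal.ofReal_le_ofReal
          have := aux_mgf η N hη0 hη1 (by linarith)
          rw [← hcdef] at this
          exact this
  -- independence of the g's
  have hgindep : iIndepFun g P := by
    have h := hξindep.comp (fun _ (x : ℝ) => ENNReal.ofReal (Real.exp (η * x)))
      (fun _ => ((measurable_id.const_mul η).exp).ennreal_ofReal)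
    exact h
  -- product bound
  have hprod : ∀ k, ∫⁻ ω, ∏ i ∈ Finset.range k, g i ω ∂P ≤ ρ ^ k := by
    intro k
    induction k with
    | zero => simp
    | succ k ih =>
      have hIF : IndepFun (∏ j ∈ Finset.range k, g j) (g k) P :=
        hgindep.indepFun_prod_range_succ hgmeas k
      have hm1 : Measurable (∏ j ∈ Finset.range k, g j) := by
        have hfn : (∏ j ∈ Finset.range k, g j) = fun a => ∏ j ∈ Finset.range k, g j a := by
          ext a; simp [Finset.prod_apply]
        rw [hfn]
        exact Finset.measurable_prod _ (fun i _ => hgmeas i)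
      have heq : ∫⁻ ω, ∏ i ∈ Finset.range (k+1), g i ω ∂P
          = (∫⁻ ω, (∏ j ∈ Finset.range k, g j) ω ∂P) * ∫⁻ ω, g k ω ∂P := by
        rw [← lintegral_mul_eq_lintegral_mul_lintegral_of_indepFun hm1 (hgmeas k) hIF]
        apply lintegral_congr
        intro ω
        simp [Finset.prod_range_succ, Finset.prod_apply]
      have heq2 : (∫⁻ ω, (∏ j ∈ Finset.range k, g j) ω ∂P)
          = ∫⁻ ω, ∏ j ∈ Finset.range k, g j ω ∂P := by
        apply lintegral_congr
        intro ω
        simp [Finset.prod_apply]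
      rw [heq, heq2, pow_succ]
      exact mul_le_mul' ih (hone k)
  -- Markov / Chernoff bound for each time k
  have hmarkov : ∀ k, P {ω | Estar ≤ S ω k}
      ≤ ENNReal.ofReal (Real.exp (-(η * a))) * ρ ^ k := by
    intro k
    have hsub : {ω | Estar ≤ S ω k} ⊆
        {ω | ENNReal.ofReal (Real.exp (η * a)) ≤ ∏ i ∈ Finset.range k, g i ω} := by
      intro ω hω
      simp only [Set.mem_setOf_eq] at hω ⊢
      have hXa : a ≤ ∑ i ∈ Finset.range k, ξ i ω := by
        rw [hS ω k] at hω
        rw [ha]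
        linarith
      have h2 : Real.exp (η * a) ≤ Real.exp (η * ∑ i ∈ Finset.range k, ξ i ω) :=
        Real.exp_le_exp.2 (mul_le_mul_of_nonneg_left hXa hη0.le)
      have h3 : ENNReal.ofReal (Real.exp (η * ∑ i ∈ Finset.range k, ξ i ω))
          = ∏ i ∈ Finset.range k, g i ω := by
        rw [Finset.mul_sum, Real.exp_sum]
        exact ENNReal.ofReal_prod_of_nonneg (fun i _ => (Real.exp_pos _).le)
      rw [← h3]
      exact ENNReal.ofReal_le_ofReal h2
    refine (measure_mono hsub).trans ?_
    have hm : Measurable fun ω => ∏ i ∈ Finset.range k, g i ω := by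
      have := Finset.measurable_prod (Finset.range k) (fun i (_ : i ∈ Finset.range k) => hgmeas i)
      simpa [Finset.prod_apply] using this
    have hεne : ENNReal.ofReal (Real.exp (η * a)) ≠ 0 :=
      (ENNReal.ofReal_pos.mpr (Real.exp_pos _)).ne'
    refine (meas_ge_le_lintegral_div hm.aemeasurable hεne ENNReal.ofReal_ne_top).trans ?_
    calc (∫⁻ ω, ∏ i ∈ Finset.range k, g i ω ∂P) / ENNReal.ofReal (Real.exp (η * a))
        ≤ ρ ^ k / ENNReal.ofReal (Real.exp (η * a)) :=
          ENNReal.div_le_div_right (hprod k) _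
      _ = ENNReal.ofReal (Real.exp (-(η * a))) * ρ ^ k := by
          rw [div_eq_mul_inv, ← ENNReal.ofReal_inv_of_pos (Real.exp_pos _), ← Real.exp_neg]
          ring
  -- union bound and geometric series
  have hunion : {ω | ({k | S ω k ≤ 0 ∨ Estar ≤ S ω k}).Nonempty ∧ Estar ≤ S ω (τ ω)}
      ⊆ ⋃ k, {ω | Estar ≤ S ω k} := fun ω hω => Set.mem_iUnion.2 ⟨τ ω, hω.2⟩
  refine (measure_mono hunion).trans ?_
  refine (measure_iUnion_le _).trans ?_
  refine (ENNReal.tsum_le_tsum hmarkov).trans ?_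
  rw [ENNReal.tsum_mul_left, ENNReal.tsum_geometric]
  have hr1 : Real.exp (-(c / N)) < 1 := by
    rw [Real.exp_lt_one_iff]
    have : 0 < c / N := div_pos hc0 hN0
    linarith
  have hpos2 : 0 < 1 - Real.exp (-(c / N)) := by linarith
  have h1ρ : 1 - ρ = ENNReal.ofReal (1 - Real.exp (-(c / N))) := by
    rw [hρ, ENNReal.ofReal_sub _ (Real.exp_pos _).le, ENNReal.ofReal_one]
  rw [h1ρ, ← ENNReal.ofReal_inv_of_pos hpos2, ← ENNReal.ofReal_mul (Real.exp_pos _).le]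
  apply ENNReal.ofReal_le_ofReal
  have hfin := aux_numeric η c N Estar hη0 hη1 hc0 hcη hNR h40 hE
  rw [ha]
  exact hfin
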